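/- The IPCW weights sum to one exactly when all last observations are failures: (1/n) ∑_{i=1}^n D_i / K̂(X_i−) = 1 if and only if ΔN(τ) = Y(τ) (equivalently, ΔC(τ) = 0, i.e., every observation i with X_i = τ has D_i = 1). -/

import Mathlib

open Finset
open scoped Classical

noncomputable section

namespace SurvStmt

/-- The finite set of distinct observed times `{X_1, …, X_n}`. -/
def times {n : ℕ} (X : Fin n → ℝ) : Finset ℝ := Finset.image X Finset.univ

/-- `Y(t) = #{i : X_i ≥ t}`, as a real number. -/
def Yat {n : ℕ} (X : Fin n → ℝ) (t : ℝ) : ℝ :=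
  ((Finset.univ.filter (fun i => t ≤ X i)).card : ℝ)

/-- `Y(t+) = #{i : X_i > t}`, as a real number. -/
def Yplus {n : ℕ} (X : Fin n → ℝ) (t : ℝ) : ℝ :=
  ((Finset.univ.filter (fun i => t < X i)).card : ℝ)

/-- `ΔN(t) = #{i : X_i = t, D_i = 1}`, as a real number. -/
def dN {n : ℕ} (X : Fin n → ℝ) (D : Fin n → Bool) (t : ℝ) : ℝ :=
  ((Finset.univ.filter (fun i => X i = t ∧ D i = true)).card : ℝ)

/-- `ΔC(t) = #{i : X_i = t, D_i = 0}`, as a real number. -/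
def dC {n : ℕ} (X : Fin n → ℝ) (D : Fin n → Bool) (t : ℝ) : ℝ :=
  ((Finset.univ.filter (fun i => X i = t ∧ D i = false)).card : ℝ)

/-- `Y†(t) = Y(t) − ΔN(t)`. -/
def Ydag {n : ℕ} (X : Fin n → ℝ) (D : Fin n → Bool) (t : ℝ) : ℝ :=
  Yat X t - dN X D t

/-- `τ = max_i X_i`, the largest observation time (0 if there is no data). -/
def tau {n : ℕ} (X : Fin n → ℝ) : ℝ := WithBot.unbotD 0 ((times X).max)

/-- Censoring product-limit estimator `K̂(t) = ∏_{u ≤ t} (1 − ΔC(u)/Y†(u))`. -/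
def Khat {n : ℕ} (X : Fin n → ℝ) (D : Fin n → Bool) (t : ℝ) : ℝ :=
  ∏ u ∈ (times X).filter (fun u => u ≤ t), (1 - dC X D u / Ydag X D u)

/-- Left limit `K̂(t−) = ∏_{u < t} (1 − ΔC(u)/Y†(u))`. -/
def Kminus {n : ℕ} (X : Fin n → ℝ) (D : Fin n → Bool) (t : ℝ) : ℝ :=
  ∏ u ∈ (times X).filter (fun u => u < t), (1 - dC X D u / Ydag X D u)

/-- Failure product-limit estimator `Ŝ_PL(t) = ∏_{u ≤ t} (1 − ΔN(u)/Y(u))`. -/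
def SPL {n : ℕ} (X : Fin n → ℝ) (D : Fin n → Bool) (t : ℝ) : ℝ :=
  ∏ u ∈ (times X).filter (fun u => u ≤ t), (1 - dN X D u / Yat X u)

/-- Left limit `Ŝ_PL(t−) = ∏_{u < t} (1 − ΔN(u)/Y(u))`. -/
def SPLminus {n : ℕ} (X : Fin n → ℝ) (D : Fin n → Bool) (t : ℝ) : ℝ :=
  ∏ u ∈ (times X).filter (fun u => u < t), (1 - dN X D u / Yat X u)

/-- IPCW estimator `F̂_IPCW(t) = (1/n) ∑_i D_i 1{X_i ≤ t} / K̂(X_i−)`. -/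
def FIPCW {n : ℕ} (X : Fin n → ℝ) (D : Fin n → Bool) (t : ℝ) : ℝ :=
  (1 / (n : ℝ)) * ∑ i : Fin n,
    (if D i = true then (1 : ℝ) else 0) * (if X i ≤ t then (1 : ℝ) else 0) / Kminus X D (X i)

/-- IPCW survival estimator `S̃_IPCW(t) = (1/n) ∑_i D_i 1{X_i > t} / K̂(X_i−)`. -/
def SIPCW {n : ℕ} (X : Fin n → ℝ) (D : Fin n → Bool) (t : ℝ) : ℝ :=
  (1 / (n : ℝ)) * ∑ i : Fin n,
    (if D i = true then (1 : ℝ) else 0) * (if t < X i then (1 : ℝ) else 0) / Kminus X D (X i)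

/-- RTTR jump weight `J(v) = 1/(n · K̂(v−))`. -/
def Jw {n : ℕ} (X : Fin n → ℝ) (D : Fin n → Bool) (v : ℝ) : ℝ :=
  1 / ((n : ℝ) * Kminus X D v)

/-- Redistribute-to-the-right estimator
`Ŝ_RTTR(t) = 1 − ∑_{v ≤ t} [J(v) ΔN(v) 1{v < τ} + J(τ) Y(τ) 1{v = τ}]`. -/
def SRTTR {n : ℕ} (X : Fin n → ℝ) (D : Fin n → Bool) (t : ℝ) : ℝ :=
  1 - ∑ v ∈ (times X).filter (fun v => v ≤ t),
      (Jw X D v * dN X D v * (if v < tau X then (1 : ℝ) else 0)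
        + Jw X D (tau X) * Yat X (tau X) * (if v = tau X then (1 : ℝ) else 0))

/-! ### Auxiliary lemmas -/

section Aux

variable {n : ℕ}

lemma mem_times {X : Fin n → ℝ} {u : ℝ} : u ∈ times X ↔ ∃ i, X i = u := by
  simp [times]

lemma Yat_pos {X : Fin n → ℝ} {u : ℝ} (hu : u ∈ times X) : 0 < Yat X u := by
  obtain ⟨i, hi⟩ := mem_times.mp hu
  have : i ∈ Finset.univ.filter (fun i => u ≤ X i) := by simp [hi.ge]
  have hc : 0 < (Finset.univ.filter (fun i => u ≤ X i)).card :=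
    Finset.card_pos.mpr ⟨i, this⟩
  unfold Yat
  exact_mod_cast hc

lemma count_split (X : Fin n → ℝ) (D : Fin n → Bool) (u : ℝ) :
    Yat X u = dN X D u + dC X D u + Yplus X u := by
  unfold Yat dN dC Yplus
  have h1 : (Finset.univ.filter (fun i => u ≤ X i)) =
      (Finset.univ.filter (fun i => X i = u)) ∪ (Finset.univ.filter (fun i => u < X i)) := by
    ext i
    simp only [Finset.mem_filter, Finset.mem_univ, true_and, Finset.mem_union]
    constructor
    · intro h
      rcases lt_or_eq_of_le h with h | h
      · exact Or.inr h
      · exact Or.inl h.symm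
    · rintro (h | h)
      · exact h.ge
      · exact h.le
  have hd1 : Disjoint (Finset.univ.filter (fun i => X i = u))
      (Finset.univ.filter (fun i => u < X i)) := by
    simp only [Finset.disjoint_left, Finset.mem_filter, Finset.mem_univ, true_and]
    intro i h1 h2
    exact absurd h1 (ne_of_gt h2)
  have h2 : (Finset.univ.filter (fun i => X i = u)) =
      (Finset.univ.filter (fun i => X i = u ∧ D i = true)) ∪
        (Finset.univ.filter (fun i => X i = u ∧ D i = false)) := by
    ext i
    simp only [Finset.mem_filter, Finset.mem_univ, true_and, Finset.mem_union]
    rcases Bool.eq_false_or_eq_true (D i) with h | h <;> simp [h]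
  have hd2 : Disjoint (Finset.univ.filter (fun i => X i = u ∧ D i = true))
      (Finset.univ.filter (fun i => X i = u ∧ D i = false)) := by
    simp only [Finset.disjoint_left, Finset.mem_filter, Finset.mem_univ, true_and]
    rintro i ⟨_, h1⟩ ⟨_, h2⟩
    simp [h1] at h2
  rw [h1, Finset.card_union_of_disjoint hd1, h2, Finset.card_union_of_disjoint hd2]
  push_cast
  ring

lemma Ydag_eq (X : Fin n → ℝ) (D : Fin n → Bool) (u : ℝ) :
    Ydag X D u = dC X D u + Yplus X u := by
  unfold Ydag
  rw [count_split X D u]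
  ring

lemma times_nonempty (hn : 0 < n) (X : Fin n → ℝ) : (times X).Nonempty :=
  ⟨X ⟨0, hn⟩, mem_times.mpr ⟨_, rfl⟩⟩

lemma tau_eq_max' (hn : 0 < n) (X : Fin n → ℝ) :
    tau X = (times X).max' (times_nonempty hn X) := by
  unfold tau
  rw [← Finset.coe_max' (times_nonempty hn X)]
  rfl

lemma tau_mem (hn : 0 < n) (X : Fin n → ℝ) : tau X ∈ times X := by
  rw [tau_eq_max' hn X]; exact Finset.max'_mem _ _

lemma le_tau (hn : 0 < n) {X : Fin n → ℝ} {u : ℝ} (hu : u ∈ times X) : u ≤ tau X := by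
  rw [tau_eq_max' hn X]; exact Finset.le_max' _ _ hu

lemma Yplus_pos (hn : 0 < n) {X : Fin n → ℝ} {u : ℝ} (hu : u < tau X) :
    0 < Yplus X u := by
  obtain ⟨i, hi⟩ := mem_times.mp (tau_mem hn X)
  have : i ∈ Finset.univ.filter (fun i => u < X i) := by simp [hi, hu]
  have hc : 0 < (Finset.univ.filter (fun i => u < X i)).card :=
    Finset.card_pos.mpr ⟨i, this⟩
  unfold Yplus
  exact_mod_cast hc

lemma dC_nonneg (X : Fin n → ℝ) (D : Fin n → Bool) (u : ℝ) : 0 ≤ dC X D u := by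
  unfold dC; positivity

lemma dN_nonneg (X : Fin n → ℝ) (D : Fin n → Bool) (u : ℝ) : 0 ≤ dN X D u := by
  unfold dN; positivity

lemma Ydag_pos (hn : 0 < n) {X : Fin n → ℝ} (D : Fin n → Bool) {u : ℝ} (hu : u < tau X) :
    0 < Ydag X D u := by
  rw [Ydag_eq]
  have := Yplus_pos hn hu
  have := dC_nonneg X D u
  linarith

lemma Kfactor (hn : 0 < n) {X : Fin n → ℝ} (D : Fin n → Bool) {u : ℝ} (hu : u < tau X) :
    1 - dC X D u / Ydag X D u = Yplus X u / Ydag X D u := by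
  have hd := (Ydag_pos hn D hu).ne'
  have he := Ydag_eq X D u
  field_simp
  linarith

lemma Sfactor {X : Fin n → ℝ} (D : Fin n → Bool) {u : ℝ} (hu : u ∈ times X) :
    1 - dN X D u / Yat X u = Ydag X D u / Yat X u := by
  have hy := (Yat_pos hu).ne'
  unfold Ydag
  field_simp

lemma SKfactor (hn : 0 < n) {X : Fin n → ℝ} (D : Fin n → Bool) {u : ℝ}
    (hu : u ∈ times X) (hlt : u < tau X) :
    (1 - dN X D u / Yat X u) * (1 - dC X D u / Ydag X D u) = Yplus X u / Yat X u := by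
  rw [Sfactor D hu, Kfactor hn D hlt]
  have h1 : Ydag X D u ≠ 0 := (Ydag_pos hn D hlt).ne'
  have h2 : Yat X u ≠ 0 := (Yat_pos hu).ne'
  field_simp

/-- Sorted enumeration of the distinct times. -/
def tt (X : Fin n → ℝ) (i : ℕ) : ℝ :=
  if h : i < (times X).card then (times X).orderEmbOfFin rfl ⟨i, h⟩ else 0

lemma tt_mem {X : Fin n → ℝ} {i : ℕ} (hi : i < (times X).card) : tt X i ∈ times X := by
  rw [tt, dif_pos hi]
  exact Finset.orderEmbOfFin_mem _ _ _

lemma tt_lt_tt {X : Fin n → ℝ} {i j : ℕ} (hij : i < j) (hj : j < (times X).card) :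
    tt X i < tt X j := by
  rw [tt, tt, dif_pos hj, dif_pos (lt_trans hij hj)]
  exact ((times X).orderEmbOfFin rfl).strictMono (by exact hij)

lemma tt_le_tt {X : Fin n → ℝ} {i j : ℕ} (hij : i ≤ j) (hj : j < (times X).card) :
    tt X i ≤ tt X j := by
  rcases lt_or_eq_of_le hij with h | h
  · exact (tt_lt_tt h hj).le
  · rw [h]

lemma tt_surj {X : Fin n → ℝ} {u : ℝ} (hu : u ∈ times X) :
    ∃ i, i < (times X).card ∧ tt X i = u := by
  have : u ∈ Set.range ((times X).orderEmbOfFin rfl) := by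
    rw [Finset.range_orderEmbOfFin]
    exact_mod_cast hu
  obtain ⟨⟨i, hi⟩, h⟩ := this
  exact ⟨i, hi, by rw [tt, dif_pos hi]; exact h⟩

lemma tt_lt_iff {X : Fin n → ℝ} {i j : ℕ} (hi : i < (times X).card)
    (hj : j < (times X).card) : tt X i < tt X j ↔ i < j := by
  constructor
  · intro h
    by_contra hc
    exact absurd (tt_le_tt (not_lt.mp hc) hi) (not_le.mpr h)
  · intro h
    exact tt_lt_tt h hj

lemma tt_last (hn : 0 < n) (X : Fin n → ℝ) :
    tt X ((times X).card - 1) = tau X := by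
  have hk : 0 < (times X).card := Finset.card_pos.mpr (times_nonempty hn X)
  have h1 : (times X).card - 1 < (times X).card := Nat.sub_lt hk one_pos
  have h2 := le_tau hn (tt_mem h1)
  obtain ⟨m, hm, hmeq⟩ := tt_surj (tau_mem hn X)
  have h3 : tau X ≤ tt X ((times X).card - 1) := by
    rw [← hmeq]
    exact tt_le_tt (Nat.le_sub_one_of_lt hm) h1
  linarith

lemma Yplus_succ {X : Fin n → ℝ} {i : ℕ} (hi : i + 1 < (times X).card) :
    Yplus X (tt X i) = Yat X (tt X (i + 1)) := by
  unfold Yplus Yat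
  congr 2
  apply Finset.filter_congr
  intro j _
  constructor
  · intro h
    obtain ⟨m, hm, hmeq⟩ := tt_surj (mem_times.mpr ⟨j, rfl⟩ : X j ∈ times X)
    rw [← hmeq] at h ⊢
    have : i < m := (tt_lt_iff (lt_trans (Nat.lt_succ_self i) hi) hm).mp h
    exact tt_le_tt this hm
  · intro h
    exact lt_of_lt_of_le (tt_lt_tt (Nat.lt_succ_self i) hi) h

lemma tele (G : ℕ → ℝ) (h0 : G 0 ≠ 0) : ∀ j : ℕ, (∀ i < j, G i ≠ 0) →
    ∏ i ∈ Finset.range j, (G (i + 1) / G i) = G j / G 0 := by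
  intro j
  induction j with
  | zero => intro _; simp [div_self h0]
  | succ j ih =>
    intro h
    rw [Finset.prod_range_succ, ih (fun i hi => h i (lt_trans hi (Nat.lt_succ_self j)))]
    have hj : G j ≠ 0 := h j (Nat.lt_succ_self j)
    field_simp

lemma Yat_tt_zero (hn : 0 < n) (X : Fin n → ℝ) : Yat X (tt X 0) = n := by
  unfold Yat
  have : (Finset.univ.filter (fun i => tt X 0 ≤ X i)) = Finset.univ := by
    apply Finset.filter_true_of_mem
    intro i _
    obtain ⟨m, hm, hmeq⟩ := tt_surj (mem_times.mpr ⟨i, rfl⟩ : X i ∈ times X)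
    rw [← hmeq]
    exact tt_le_tt (Nat.zero_le m) hm
  rw [this, Finset.card_univ, Fintype.card_fin]

lemma filter_lt_tt {X : Fin n → ℝ} {j : ℕ} (hj : j < (times X).card) :
    (times X).filter (fun u => u < tt X j) = (Finset.range j).image (tt X) := by
  ext u
  simp only [Finset.mem_filter, Finset.mem_image, Finset.mem_range]
  constructor
  · rintro ⟨hu, hlt⟩
    obtain ⟨i, hi, hieq⟩ := tt_surj hu
    refine ⟨i, ?_, hieq⟩
    rw [← hieq] at hlt
    exact (tt_lt_iff hi hj).mp hlt
  · rintro ⟨i, hi, rfl⟩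
    exact ⟨tt_mem (lt_trans hi hj), tt_lt_tt hi hj⟩

lemma tt_inj_on {X : Fin n → ℝ} {j : ℕ} (hj : j ≤ (times X).card) :
    ∀ x ∈ Finset.range j, ∀ y ∈ Finset.range j, tt X x = tt X y → x = y := by
  intro x hx y hy h
  simp only [Finset.mem_range] at hx hy
  by_contra hc
  rcases Nat.lt_or_ge x y with h' | h'
  · exact absurd h (ne_of_lt (tt_lt_tt h' (lt_of_lt_of_le hy hj)))
  · have h'' : y < x := lt_of_le_of_ne h' (fun e => hc e.symm)
    exact absurd h.symm (ne_of_lt (tt_lt_tt h'' (lt_of_lt_of_le hx hj)))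

lemma keyA (hn : 0 < n) {X : Fin n → ℝ} (D : Fin n → Bool) {j : ℕ}
    (hj : j < (times X).card) :
    SPLminus X D (tt X j) * Kminus X D (tt X j) = Yat X (tt X j) / n := by
  unfold SPLminus Kminus
  rw [← Finset.prod_mul_distrib, filter_lt_tt hj,
    Finset.prod_image (tt_inj_on hj.le)]
  have hstep : ∀ i ∈ Finset.range j,
      (1 - dN X D (tt X i) / Yat X (tt X i)) * (1 - dC X D (tt X i) / Ydag X D (tt X i))
        = Yat X (tt X (i + 1)) / Yat X (tt X i) := by
    intro i hi
    simp only [Finset.mem_range] at hi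
    have hik : i < (times X).card := lt_trans hi hj
    have hik1 : i + 1 < (times X).card := by omega
    have hlt : tt X i < tau X := by
      calc tt X i < tt X j := tt_lt_tt hi hj
        _ ≤ tau X := le_tau hn (tt_mem hj)
    rw [SKfactor hn D (tt_mem hik) hlt, Yplus_succ hik1]
  rw [Finset.prod_congr rfl hstep]
  have hk0 : (0:ℕ) < (times X).card := hj.trans_le' (Nat.zero_le j)
  rw [tele (fun i => Yat X (tt X i)) (Yat_pos (tt_mem hk0)).ne' j
    (fun i hi => (Yat_pos (tt_mem (lt_trans hi hj))).ne')]
  rw [Yat_tt_zero hn X]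

lemma Kminus_pos (hn : 0 < n) {X : Fin n → ℝ} (D : Fin n → Bool) {u : ℝ}
    (hu : u ≤ tau X) : 0 < Kminus X D u := by
  unfold Kminus
  apply Finset.prod_pos
  intro v hv
  simp only [Finset.mem_filter] at hv
  have hlt : v < tau X := lt_of_lt_of_le hv.2 hu
  rw [Kfactor hn D hlt]
  exact div_pos (Yplus_pos hn hlt) (Ydag_pos hn D hlt)

lemma SPL_insert {X : Fin n → ℝ} (D : Fin n → Bool) {u : ℝ} (hu : u ∈ times X) :
    SPL X D u = SPLminus X D u * (1 - dN X D u / Yat X u) := by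
  unfold SPL SPLminus
  have h : (times X).filter (fun v => v ≤ u) = insert u ((times X).filter (fun v => v < u)) := by
    ext v
    simp only [Finset.mem_filter, Finset.mem_insert]
    constructor
    · rintro ⟨hv, hle⟩
      rcases lt_or_eq_of_le hle with h | h
      · exact Or.inr ⟨hv, h⟩
      · exact Or.inl h
    · rintro (rfl | ⟨hv, hlt⟩)
      · exact ⟨hu, le_refl _⟩
      · exact ⟨hv, hlt.le⟩
  have hnm : u ∉ (times X).filter (fun v => v < u) := by
    simp only [Finset.mem_filter]
    rintro ⟨-, hlt⟩
    exact lt_irrefl u hlt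
  rw [h, Finset.prod_insert hnm]
  ring

lemma SPLminus_succ (hn : 0 < n) {X : Fin n → ℝ} (D : Fin n → Bool) {i : ℕ}
    (hi : i + 1 < (times X).card) :
    SPL X D (tt X i) = SPLminus X D (tt X (i + 1)) := by
  unfold SPL SPLminus
  congr 1
  ext v
  simp only [Finset.mem_filter, and_congr_right_iff]
  intro hv
  constructor
  · intro h
    exact lt_of_le_of_lt h (tt_lt_tt (Nat.lt_succ_self i) hi)
  · intro h
    obtain ⟨m, hm, hmeq⟩ := tt_surj hv
    rw [← hmeq] at h ⊢
    have : m < i + 1 := (tt_lt_iff hm hi).mp h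
    exact tt_le_tt (Nat.lt_succ_iff.mp this) (lt_trans (Nat.lt_succ_self i) hi)

lemma SPLminus_zero (hn : 0 < n) (X : Fin n → ℝ) (D : Fin n → Bool) :
    SPLminus X D (tt X 0) = 1 := by
  unfold SPLminus
  have : (times X).filter (fun v => v < tt X 0) = ∅ := by
    rw [Finset.filter_eq_empty_iff]
    intro v hv
    obtain ⟨m, hm, hmeq⟩ := tt_surj hv
    rw [← hmeq]
    exact not_lt.mpr (tt_le_tt (Nat.zero_le m) hm)
  rw [this, Finset.prod_empty]

lemma per_term (hn : 0 < n) {X : Fin n → ℝ} (D : Fin n → Bool) {j : ℕ}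
    (hj : j < (times X).card) :
    dN X D (tt X j) / Kminus X D (tt X j)
      = n * (SPLminus X D (tt X j) - SPL X D (tt X j)) := by
  have hK := (Kminus_pos hn D (le_tau hn (tt_mem hj))).ne'
  have hY := (Yat_pos (tt_mem hj)).ne'
  have hn' : (n : ℝ) ≠ 0 := Nat.cast_ne_zero.mpr hn.ne'
  have hA' : (n : ℝ) * (SPLminus X D (tt X j) * Kminus X D (tt X j)) = Yat X (tt X j) := by
    rw [keyA hn D hj]
    field_simp
  rw [SPL_insert D (tt_mem hj), div_eq_iff hK]
  have h2 : (n : ℝ) * (SPLminus X D (tt X j)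
        - SPLminus X D (tt X j) * (1 - dN X D (tt X j) / Yat X (tt X j)))
          * Kminus X D (tt X j)
      = dN X D (tt X j) / Yat X (tt X j)
          * ((n : ℝ) * (SPLminus X D (tt X j) * Kminus X D (tt X j))) := by
    ring
  rw [h2, hA', div_mul_cancel₀ _ hY]

lemma main_sum (hn : 0 < n) (X : Fin n → ℝ) (D : Fin n → Bool) :
    ∑ u ∈ times X, dN X D u / Kminus X D u = n * (1 - SPL X D (tau X)) := by
  have hk : 0 < (times X).card := Finset.card_pos.mpr (times_nonempty hn X)
  have himg : times X = (Finset.range (times X).card).image (tt X) := by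
    ext u
    simp only [Finset.mem_image, Finset.mem_range]
    constructor
    · intro hu
      obtain ⟨i, hi, hieq⟩ := tt_surj hu
      exact ⟨i, hi, hieq⟩
    · rintro ⟨i, hi, rfl⟩
      exact tt_mem hi
  have hterm : ∀ i ∈ Finset.range (times X).card,
      dN X D (tt X i) / Kminus X D (tt X i)
        = (n : ℝ) * ((if i < (times X).card then SPLminus X D (tt X i) else SPL X D (tau X))
            - (if i + 1 < (times X).card then SPLminus X D (tt X (i + 1)) else SPL X D (tau X))) := by
    intro i hi
    simp only [Finset.mem_range] at hi
    rw [per_term hn D hi, if_pos hi]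
    rcases Nat.lt_or_ge (i + 1) (times X).card with h | h
    · rw [if_pos h, SPLminus_succ hn D h]
    · rw [if_neg (not_lt.mpr h)]
      have h1 : i + 1 = (times X).card := le_antisymm (Nat.succ_le_of_lt hi) h
      have h2 : tt X i = tau X := by
        rw [← tt_last hn X]
        congr 1
        omega
      rw [h2]
  calc ∑ u ∈ times X, dN X D u / Kminus X D u
      = ∑ i ∈ Finset.range (times X).card, dN X D (tt X i) / Kminus X D (tt X i) := by
        conv_lhs => rw [himg]
        exact Finset.sum_image (tt_inj_on (le_refl _))
    _ = ∑ i ∈ Finset.range (times X).card,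
          (n : ℝ) * ((if i < (times X).card then SPLminus X D (tt X i) else SPL X D (tau X))
            - (if i + 1 < (times X).card then SPLminus X D (tt X (i + 1)) else SPL X D (tau X))) :=
        Finset.sum_congr rfl hterm
    _ = (n : ℝ) * ∑ i ∈ Finset.range (times X).card,
          ((fun m => if m < (times X).card then SPLminus X D (tt X m) else SPL X D (tau X)) i
            - (fun m => if m < (times X).card then SPLminus X D (tt X m) else SPL X D (tau X)) (i + 1)) := by
        rw [Finset.mul_sum]
    _ = (n : ℝ) * ((fun m => if m < (times X).card then SPLminus X D (tt X m) else SPL X D (tau X)) 0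
          - (fun m => if m < (times X).card then SPLminus X D (tt X m) else SPL X D (tau X)) ((times X).card)) := by
        rw [Finset.sum_range_sub']
    _ = n * (1 - SPL X D (tau X)) := by
        simp only [if_pos hk, if_neg (lt_irrefl (times X).card), SPLminus_zero hn X D]

lemma group_sum (hn : 0 < n) (X : Fin n → ℝ) (D : Fin n → Bool) :
    (∑ i : Fin n, (if D i = true then (1 : ℝ) else 0) / Kminus X D (X i))
      = ∑ u ∈ times X, dN X D u / Kminus X D u := by
  rw [← Finset.sum_fiberwise_of_maps_to
    (fun i _ => (mem_times.mpr ⟨i, rfl⟩ : X i ∈ times X))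
    (fun i => (if D i = true then (1 : ℝ) else 0) / Kminus X D (X i))]
  apply Finset.sum_congr rfl
  intro u _
  have h1 : ∀ i ∈ Finset.univ.filter (fun i => X i = u),
      (if D i = true then (1 : ℝ) else 0) / Kminus X D (X i)
        = (if D i = true then (1 : ℝ) else 0) / Kminus X D u := by
    intro i hi
    simp only [Finset.mem_filter] at hi
    rw [hi.2]
  rw [Finset.sum_congr rfl h1, ← Finset.sum_div]
  congr 1
  rw [Finset.sum_boole, Finset.filter_filter]
  rfl

lemma SPL_tau_zero_iff (hn : 0 < n) (X : Fin n → ℝ) (D : Fin n → Bool) :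
    SPL X D (tau X) = 0 ↔ dN X D (tau X) = Yat X (tau X) := by
  have hfull : (times X).filter (fun u => u ≤ tau X) = times X :=
    Finset.filter_true_of_mem (fun u hu => le_tau hn hu)
  unfold SPL
  rw [hfull]
  constructor
  · intro h
    obtain ⟨u, hu, hzero⟩ := Finset.prod_eq_zero_iff.mp h
    have hY := (Yat_pos hu).ne'
    have hdN : dN X D u = Yat X u := by
      have : dN X D u / Yat X u = 1 := by linarith
      field_simp at this
      linarith
    have hu_tau : u = tau X := by
      by_contra hne
      have hlt : u < tau X := lt_of_le_of_ne (le_tau hn hu) hne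
      have hdag := Ydag_pos hn D hlt
      rw [Ydag] at hdag
      linarith
    rw [← hu_tau]
    exact hdN
  · intro h
    apply Finset.prod_eq_zero (tau_mem hn X)
    rw [h, div_self (Yat_pos (tau_mem hn X)).ne']
    ring

end Aux

/-- the IPCW weights sum to one iff all last observations are failures:
`(1/n) ∑_i D_i / K̂(X_i−) = 1 ↔ ΔN(τ) = Y(τ)`. -/
theorem stmt12 (n : ℕ) (hn : 0 < n) (X : Fin n → ℝ) (D : Fin n → Bool)
    (hX : ∀ i, 0 < X i) :
    ((1 / (n : ℝ)) * ∑ i : Fin n,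
        (if D i = true then (1 : ℝ) else 0) / Kminus X D (X i) = 1)
      ↔ dN X D (tau X) = Yat X (tau X) := by
  rw [group_sum hn X D, main_sum hn X D]
  have hn' : (n : ℝ) ≠ 0 := Nat.cast_ne_zero.mpr hn.ne'
  rw [one_div, inv_mul_cancel_left₀ hn']
  rw [← SPL_tau_zero_iff hn X D]
  constructor
  · intro h; linarith
  · intro h; linarith

end SurvStmt
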